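/- Let n be a positive integer, B ∈ M_n(ℂ), and suppose B = U·Σ·Vᴴ where U, V ∈ M_n(ℂ) are unitary and Σ is diagonal with nonnegative real diagonal entries. Then U·Vᴴ is a nearest unitary matrix to B in Frobenius norm: for every unitary D ∈ M_n(ℂ), ‖U·Vᴴ − B‖_F ≤ ‖D − B‖_F. -/

import Mathlib

open Matrix

private lemma unitary_col_sum {n : ℕ} (D : Matrix (Fin n) (Fin n) ℂ)
    (hD : Dᴴ * D = 1) (t : Fin n) :
    ∑ s : Fin n, Complex.normSq (D s t) = 1 := by
  have h := congrFun (congrFun hD t) t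
  rw [Matrix.mul_apply, Matrix.one_apply_eq] at h
  have h2 : (∑ s : Fin n, (Complex.normSq (D s t) : ℂ)) = 1 := by
    rw [← h]
    refine Finset.sum_congr rfl fun s _ => ?_
    rw [Matrix.conjTranspose_apply]
    exact Complex.normSq_eq_conj_mul_self
  exact_mod_cast h2

private lemma expand_norm {n : ℕ} (B D : Matrix (Fin n) (Fin n) ℂ) (hD : Dᴴ * D = 1) :
    ∑ s : Fin n, ∑ t : Fin n, ‖D s t - B s t‖ ^ 2 =
      (n : ℝ) + (∑ s : Fin n, ∑ t : Fin n, ‖B s t‖ ^ 2)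
        - 2 * (Matrix.trace (Dᴴ * B)).re := by
  have hpt : ∀ s t : Fin n, ‖D s t - B s t‖ ^ 2 =
      Complex.normSq (D s t) + ‖B s t‖ ^ 2
        - 2 * ((starRingEnd ℂ) (D s t) * B s t).re := by
    intro s t
    rw [Complex.sq_norm, Complex.sq_norm]
    simp [Complex.normSq_sub, Complex.mul_re]
  have htr : (Matrix.trace (Dᴴ * B)).re
      = ∑ s : Fin n, ∑ t : Fin n, ((starRingEnd ℂ) (D s t) * B s t).re := by
    rw [Matrix.trace, Complex.re_sum, Finset.sum_comm]
    refine Finset.sum_congr rfl fun t _ => ?_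
    rw [Matrix.diag_apply, Matrix.mul_apply, Complex.re_sum]
    exact Finset.sum_congr rfl fun s _ => rfl
  have hDn : ∑ s : Fin n, ∑ t : Fin n, Complex.normSq (D s t) = (n : ℝ) := by
    rw [Finset.sum_comm, Finset.sum_congr rfl fun t _ => unitary_col_sum D hD t]
    simp
  simp_rw [hpt, Finset.sum_sub_distrib, Finset.sum_add_distrib, ← Finset.mul_sum]
  rw [hDn, htr]

private lemma trace_re_eq {n : ℕ} (B U V D : Matrix (Fin n) (Fin n) ℂ) (σ : Fin n → ℝ)
    (hB : B = U * Matrix.diagonal (fun i => (σ i : ℂ)) * Vᴴ) :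
    (Matrix.trace (Dᴴ * B)).re = ∑ i : Fin n, ((Vᴴ * Dᴴ * U) i i).re * σ i := by
  have h1 : Dᴴ * B = (Dᴴ * U * Matrix.diagonal (fun i => (σ i : ℂ))) * Vᴴ := by
    rw [hB]; noncomm_ring
  rw [h1, Matrix.trace_mul_comm, Matrix.trace, Complex.re_sum]
  refine Finset.sum_congr rfl fun i _ => ?_
  rw [Matrix.diag_apply,
    show Vᴴ * (Dᴴ * U * Matrix.diagonal (fun i => (σ i : ℂ)))
      = (Vᴴ * Dᴴ * U) * Matrix.diagonal (fun i => (σ i : ℂ)) by noncomm_ring,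
    Matrix.mul_diagonal]
  simp [Complex.mul_re]

theorem nearest_unitary_closed_form {n : ℕ} (hn : 0 < n)
    (B U V : Matrix (Fin n) (Fin n) ℂ) (σ : Fin n → ℝ) (hσ : ∀ i, 0 ≤ σ i)
    (hU : Uᴴ * U = 1) (hV : Vᴴ * V = 1)
    (hB : B = U * Matrix.diagonal (fun i => (σ i : ℂ)) * Vᴴ) :
    ∀ D : Matrix (Fin n) (Fin n) ℂ, Dᴴ * D = 1 →
      Real.sqrt (∑ s : Fin n, ∑ t : Fin n, ‖(U * Vᴴ) s t - B s t‖ ^ 2) ≤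
      Real.sqrt (∑ s : Fin n, ∑ t : Fin n, ‖D s t - B s t‖ ^ 2) := by
  intro D hD
  have hVV : V * Vᴴ = 1 := mul_eq_one_comm.mp hV
  have hDD : D * Dᴴ = 1 := mul_eq_one_comm.mp hD
  have hD0 : (U * Vᴴ)ᴴ * (U * Vᴴ) = 1 := by
    rw [Matrix.conjTranspose_mul, Matrix.conjTranspose_conjTranspose]
    calc V * Uᴴ * (U * Vᴴ) = V * (Uᴴ * U) * Vᴴ := by noncomm_ring
    _ = 1 := by rw [hU, Matrix.mul_one, hVV]
  apply Real.sqrt_le_sqrt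
  rw [expand_norm B (U * Vᴴ) hD0, expand_norm B D hD,
    trace_re_eq B U V (U * Vᴴ) σ hB, trace_re_eq B U V D σ hB]
  have hW0 : Vᴴ * (U * Vᴴ)ᴴ * U = 1 := by
    rw [Matrix.conjTranspose_mul, Matrix.conjTranspose_conjTranspose]
    calc Vᴴ * (V * Uᴴ) * U = (Vᴴ * V) * (Uᴴ * U) := by noncomm_ring
    _ = 1 := by rw [hU, hV, Matrix.mul_one]
  have hWW : (Vᴴ * Dᴴ * U)ᴴ * (Vᴴ * Dᴴ * U) = 1 := by
    rw [Matrix.conjTranspose_mul, Matrix.conjTranspose_mul,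
      Matrix.conjTranspose_conjTranspose, Matrix.conjTranspose_conjTranspose]
    calc Uᴴ * (D * V) * (Vᴴ * Dᴴ * U) = Uᴴ * (D * (V * Vᴴ) * Dᴴ) * U := by noncomm_ring
    _ = 1 := by rw [hVV, Matrix.mul_one, hDD, Matrix.mul_one, hU]
  have hdiag : ∀ i : Fin n, ((Vᴴ * Dᴴ * U) i i).re ≤ 1 := by
    intro i
    have hcol := unitary_col_sum _ hWW i
    have h1 : Complex.normSq ((Vᴴ * Dᴴ * U) i i) ≤ 1 := by
      rw [← hcol]
      exact Finset.single_le_sum (f := fun s => Complex.normSq ((Vᴴ * Dᴴ * U) s i)) (fun s _ => Complex.normSq_nonneg _) (Finset.mem_univ i)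
    have h2 := Complex.re_le_norm ((Vᴴ * Dᴴ * U) i i)
    have h3 : ‖(Vᴴ * Dᴴ * U) i i‖ ≤ 1 := by
      rw [Complex.norm_def]
      calc Real.sqrt (Complex.normSq ((Vᴴ * Dᴴ * U) i i)) ≤ Real.sqrt 1 :=
        Real.sqrt_le_sqrt h1
      _ = 1 := Real.sqrt_one
    linarith
  have hsum : ∑ i : Fin n, ((Vᴴ * Dᴴ * U) i i).re * σ i ≤
      ∑ i : Fin n, ((1 : Matrix (Fin n) (Fin n) ℂ) i i).re * σ i := by
    refine Finset.sum_le_sum fun i _ => ?_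
    rw [Matrix.one_apply_eq]
    simp only [Complex.one_re, one_mul]
    exact mul_le_of_le_one_left (hσ i) (hdiag i)
  rw [hW0]
  linarith
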